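/- Let n ≥ 0, let X ⊂ [−1,1]^3 be a finite set with weights w_ξ (ξ ∈ X) such that Σ_{ξ∈X} w_ξ q(ξ) = ∫_{[−1,1]^3} q dμ for every polynomial q of total degree ≤ 2n, and let h ∈ L²(dμ). Define m_α = ∫ h p_α dμ and λ_ξ = w_ξ Σ_{|α|≤n} p_α(ξ) m_α. Then the cubature formula Σ_{ξ∈X} λ_ξ f(ξ) = ∫_{[−1,1]^3} h(x) f(x) dμ holds exactly for every polynomial f of total degree ≤ n in three variables. -/

import Mathlib

open Real MeasureTheory

/-- The closed cube `[-1,1]³`. -/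
def cube3 : Set (Fin 3 → ℝ) := Set.univ.pi fun _ => Set.Icc (-1 : ℝ) 1

/-- The product Chebyshev probability measure `dμ = W₃(x) dx` on `[-1,1]³`,
`W₃(x) = π^{-3} ∏ᵢ (1 - xᵢ²)^{-1/2}`. -/
noncomputable def chebMeasure3 : Measure (Fin 3 → ℝ) :=
  (volume.restrict (Set.univ.pi fun _ : Fin 3 => Set.Ioo (-1 : ℝ) 1)).withDensity
    (fun x => ENNReal.ofReal (∏ i, (π * Real.sqrt (1 - (x i) ^ 2))⁻¹))

/-- The normalized Chebyshev functions `T̂_0 = 1`, `T̂_k(x) = √2 cos(k arccos x)` for `k ≥ 1`. -/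
noncomputable def That (k : ℕ) (x : ℝ) : ℝ :=
  if k = 0 then 1 else Real.sqrt 2 * Real.cos ((k : ℝ) * Real.arccos x)

/-- The product Chebyshev orthonormal basis `p_α(x) = T̂_{α₁}(x₁) T̂_{α₂}(x₂) T̂_{α₃}(x₃)`. -/
noncomputable def pCheb (α : Fin 3 → ℕ) (x : Fin 3 → ℝ) : ℝ :=
  ∏ s, That (α s) (x s)

/-- The index set `{α ∈ ℕ³ : |α| ≤ n}`. -/
def idx3 (n : ℕ) : Finset (Fin 3 → ℕ) :=
  (Fintype.piFinset fun _ => Finset.range (n + 1)).filter (fun α => ∑ s, α s ≤ n)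

/-! ### Auxiliary material -/

open scoped NNReal ENNReal

noncomputable def wfun (t : ℝ) : ℝ := (π * Real.sqrt (1 - t^2))⁻¹

section TrigIntegrals

lemma intcos (c : ℤ) (hc : c ≠ 0) : ∫ θ in (0:ℝ)..π, Real.cos (c * θ) = 0 := by
  have hc' : (c : ℝ) ≠ 0 := Int.cast_ne_zero.mpr hc
  rw [intervalIntegral.integral_comp_mul_left Real.cos hc']
  simp [Real.sin_int_mul_pi]

/-- the auxiliary "cosine version" of `That`. -/
noncomputable def ee (j : ℕ) (θ : ℝ) : ℝ :=
  if j = 0 then 1 else Real.sqrt 2 * Real.cos ((j : ℝ) * θ)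

lemma cos_mul_cos_int (j k : ℕ) :
    ∫ θ in (0:ℝ)..π, Real.cos ((j:ℝ) * θ) * Real.cos ((k:ℝ) * θ)
      = if j = k then (if j = 0 then π else π/2) else 0 := by
  have key : ∀ θ : ℝ, Real.cos ((j:ℝ) * θ) * Real.cos ((k:ℝ) * θ)
      = (Real.cos ((((j:ℤ) - k : ℤ) : ℝ) * θ) + Real.cos ((((j:ℤ) + k : ℤ) : ℝ) * θ)) / 2 := by
    intro θ
    have := Real.two_mul_cos_mul_cos ((j:ℝ) * θ) ((k:ℝ) * θ)
    push_cast
    rw [sub_mul, add_mul]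
    linarith
  simp only [key]
  rw [intervalIntegral.integral_div]
  rw [intervalIntegral.integral_add]
  · by_cases hjk : j = k
    · subst hjk
      by_cases hj : j = 0
      · subst hj; simp
      · have h1 : ((j:ℤ) - j : ℤ) = 0 := by ring
        have h2 : ((j:ℤ) + j : ℤ) ≠ 0 := by positivity
        rw [h1, intcos _ h2]
        simp [hj]
    · have h1 : ((j:ℤ) - k : ℤ) ≠ 0 := by
        simp only [sub_ne_zero]; exact_mod_cast hjk
      by_cases h2 : ((j:ℤ) + k : ℤ) = 0
      · have hj : j = 0 := by omega
        have hk : k = 0 := by omega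
        exact absurd (hj.trans hk.symm) hjk
      · rw [intcos _ h1, intcos _ h2]; simp [hjk]
  · exact (Real.continuous_cos.comp (continuous_const.mul continuous_id)).intervalIntegrable _ _
  · exact (Real.continuous_cos.comp (continuous_const.mul continuous_id)).intervalIntegrable _ _

lemma ee_orth (j k : ℕ) :
    ∫ θ in (0:ℝ)..π, ee j θ * ee k θ = if j = k then π else 0 := by
  by_cases hj : j = 0 <;> by_cases hk : k = 0
  · subst hj; subst hk; simp [ee]
  · subst hj
    have := cos_mul_cos_int 0 k
    simp only [Nat.cast_zero, zero_mul, Real.cos_zero, one_mul] at this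
    simp only [ee, if_pos rfl, if_true, one_mul, if_neg hk]
    rw [intervalIntegral.integral_const_mul, this]
    simp [Ne.symm hk, hk]
  · subst hk
    have := cos_mul_cos_int j 0
    simp only [Nat.cast_zero, zero_mul, Real.cos_zero, mul_one] at this
    simp only [ee, if_pos rfl, if_true, mul_one, if_neg hj]
    rw [intervalIntegral.integral_const_mul, this]
    simp [hj]
  · simp only [ee, if_neg hj, if_neg hk]
    have : ∀ θ : ℝ, Real.sqrt 2 * Real.cos ((j:ℝ) * θ) * (Real.sqrt 2 * Real.cos ((k:ℝ) * θ))
        = 2 * (Real.cos ((j:ℝ) * θ) * Real.cos ((k:ℝ) * θ)) := by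
      intro θ
      have h2 : Real.sqrt 2 * Real.sqrt 2 = 2 := Real.mul_self_sqrt (by norm_num)
      calc Real.sqrt 2 * Real.cos ((j:ℝ) * θ) * (Real.sqrt 2 * Real.cos ((k:ℝ) * θ))
          = (Real.sqrt 2 * Real.sqrt 2) * (Real.cos ((j:ℝ) * θ) * Real.cos ((k:ℝ) * θ)) := by ring
        _ = 2 * (Real.cos ((j:ℝ) * θ) * Real.cos ((k:ℝ) * θ)) := by rw [h2]
    simp only [this]
    rw [intervalIntegral.integral_const_mul, cos_mul_cos_int j k]
    by_cases hjk : j = k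
    · subst hjk; simp [hj]; ring
    · simp [hjk]

end TrigIntegrals

section ChangeOfVariables

lemma cos_image : Real.cos '' Set.Ioo 0 π = Set.Ioo (-1:ℝ) 1 := by
  ext t
  constructor
  · rintro ⟨θ, hθ, rfl⟩
    constructor
    · have := Real.strictAntiOn_cos (Set.mem_Icc.mpr ⟨le_of_lt hθ.1, le_of_lt hθ.2⟩)
        (Set.mem_Icc.mpr ⟨le_of_lt Real.pi_pos, le_refl π⟩) hθ.2
      simpa [Real.cos_pi] using this
    · have := Real.strictAntiOn_cos (Set.mem_Icc.mpr ⟨le_refl 0, le_of_lt Real.pi_pos⟩)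
        (Set.mem_Icc.mpr ⟨le_of_lt hθ.1, le_of_lt hθ.2⟩) hθ.1
      simpa [Real.cos_zero] using this
  · rintro ⟨h1, h2⟩
    refine ⟨Real.arccos t, ⟨Real.arccos_pos.mpr h2, ?_⟩, Real.cos_arccos h1.le h2.le⟩
    exact lt_of_le_of_ne (Real.arccos_le_pi t) (fun h => absurd (Real.arccos_eq_pi.mp h) (by linarith))

lemma sin_sq' (θ : ℝ) (hθ : θ ∈ Set.Ioo 0 π) : Real.sqrt (1 - Real.cos θ ^ 2) = Real.sin θ := by
  rw [show 1 - Real.cos θ ^ 2 = Real.sin θ ^ 2 by rw [Real.sin_sq]; ]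
  exact Real.sqrt_sq (Real.sin_nonneg_of_nonneg_of_le_pi hθ.1.le hθ.2.le)

lemma oneD (g : ℝ → ℝ) :
    ∫ t in Set.Ioo (-1:ℝ) 1, g t * wfun t = ∫ θ in Set.Ioo 0 π, π⁻¹ * g (Real.cos θ) := by
  rw [← cos_image]
  rw [integral_image_eq_integral_abs_deriv_smul measurableSet_Ioo
      (fun θ _ => (Real.hasDerivAt_cos θ).hasDerivWithinAt)
      (Real.injOn_cos.mono (fun θ hθ => Set.mem_Icc.mpr ⟨le_of_lt hθ.1, le_of_lt hθ.2⟩))]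
  refine setIntegral_congr_fun measurableSet_Ioo (fun θ hθ => ?_)
  have hs : 0 < Real.sin θ := Real.sin_pos_of_pos_of_lt_pi hθ.1 hθ.2
  rw [abs_neg, abs_of_pos hs, smul_eq_mul, wfun, sin_sq' θ hθ]
  field_simp

lemma wfun_integrableOn : IntegrableOn wfun (Set.Ioo (-1:ℝ) 1) := by
  rw [← cos_image]
  rw [integrableOn_image_iff_integrableOn_abs_deriv_smul measurableSet_Ioo
      (fun θ _ => (Real.hasDerivAt_cos θ).hasDerivWithinAt)
      (Real.injOn_cos.mono (fun θ hθ => Set.mem_Icc.mpr ⟨le_of_lt hθ.1, le_of_lt hθ.2⟩))]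
  have : ∀ θ ∈ Set.Ioo (0:ℝ) π, |(-Real.sin θ)| • wfun (Real.cos θ) = π⁻¹ := by
    intro θ hθ
    have hs : 0 < Real.sin θ := Real.sin_pos_of_pos_of_lt_pi hθ.1 hθ.2
    rw [abs_neg, abs_of_pos hs, smul_eq_mul, wfun, sin_sq' θ hθ]
    field_simp
  refine (integrableOn_congr_fun this measurableSet_Ioo).mpr ?_
  exact integrableOn_const measure_Ioo_lt_top.ne

lemma wfun_nonneg (t : ℝ) : 0 ≤ wfun t := by
  unfold wfun
  positivity

lemma That_cos (j : ℕ) (θ : ℝ) (hθ : θ ∈ Set.Ioo 0 π) : That j (Real.cos θ) = ee j θ := by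
  unfold That ee
  rw [Real.arccos_cos hθ.1.le hθ.2.le]

lemma that_orth (j k : ℕ) :
    ∫ t in Set.Ioo (-1:ℝ) 1, (That j t * That k t) * wfun t = if j = k then 1 else 0 := by
  rw [oneD]
  have : ∫ θ in Set.Ioo 0 π, π⁻¹ * (That j (Real.cos θ) * That k (Real.cos θ))
      = ∫ θ in Set.Ioo 0 π, π⁻¹ * (ee j θ * ee k θ) := by
    refine setIntegral_congr_fun measurableSet_Ioo (fun θ hθ => ?_)
    rw [That_cos j θ hθ, That_cos k θ hθ]
  rw [this]
  rw [integral_const_mul]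
  rw [← MeasureTheory.integral_Ioc_eq_integral_Ioo,
    ← intervalIntegral.integral_of_le Real.pi_pos.le, ee_orth]
  by_cases hjk : j = k <;> simp [hjk]

end ChangeOfVariables

section Fubini

lemma wfun_measurable : Measurable wfun := by
  unfold wfun
  exact ((continuous_const.mul ((continuous_const.sub (continuous_pow 2)).sqrt)).measurable).inv

lemma cheb_density_eq : (fun x : Fin 3 → ℝ => ENNReal.ofReal (∏ i, (π * Real.sqrt (1 - (x i) ^ 2))⁻¹))
      = fun x => ((Real.toNNReal (∏ i, wfun (x i)) : ℝ≥0) : ℝ≥0∞) := by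
  funext x; simp [ENNReal.ofReal, wfun]

lemma prodIndicator3 (g : Fin 3 → ℝ → ℝ) (x : Fin 3 → ℝ) :
    Set.indicator (Set.univ.pi fun _ : Fin 3 => Set.Ioo (-1 : ℝ) 1)
      (fun y => ∏ i, (g i (y i) * wfun (y i))) x
    = ∏ i, Set.indicator (Set.Ioo (-1:ℝ) 1) (fun t => g i t * wfun t) (x i) := by
  by_cases hx : x ∈ Set.univ.pi fun _ : Fin 3 => Set.Ioo (-1 : ℝ) 1
  · rw [Set.indicator_of_mem hx]
    exact Finset.prod_congr rfl (fun i _ =>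
      (Set.indicator_of_mem (show x i ∈ Set.Ioo (-1:ℝ) 1 from hx i (Set.mem_univ i))
        (fun t => g i t * wfun t)).symm)
  · rw [Set.indicator_of_notMem hx]
    rw [Set.mem_pi] at hx
    push_neg at hx
    obtain ⟨i, _, hi⟩ := hx
    exact (Finset.prod_eq_zero (Finset.mem_univ i)
      (Set.indicator_of_notMem hi _)).symm

lemma cheb3_prod (g : Fin 3 → ℝ → ℝ) (hg : ∀ i, Measurable (g i)) :
    ∫ x, ∏ i, g i (x i) ∂chebMeasure3
      = ∏ i, ∫ t in Set.Ioo (-1:ℝ) 1, g i t * wfun t := by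
  unfold chebMeasure3
  rw [cheb_density_eq]
  have hmeas : Measurable fun x : Fin 3 → ℝ => Real.toNNReal (∏ i, wfun (x i)) :=
    (Finset.measurable_prod Finset.univ
      (fun i _ => wfun_measurable.comp (measurable_pi_apply i))).real_toNNReal
  rw [integral_withDensity_eq_integral_smul hmeas]
  have hpt : ∀ x : Fin 3 → ℝ,
      (Real.toNNReal (∏ i, wfun (x i))) • (∏ i, g i (x i))
        = ∏ i, (g i (x i) * wfun (x i)) := by
    intro x
    rw [NNReal.smul_def, Real.coe_toNNReal _ (Finset.prod_nonneg fun i _ => wfun_nonneg _),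
      smul_eq_mul, Finset.prod_mul_distrib]
    ring
  simp only [hpt]
  rw [← MeasureTheory.integral_indicator (MeasurableSet.univ_pi fun _ => measurableSet_Ioo)]
  simp only [prodIndicator3 g]
  rw [MeasureTheory.volume_pi, MeasureTheory.integral_fintype_prod_eq_prod (ι := Fin 3)
    (f := fun i => Set.indicator (Set.Ioo (-1:ℝ) 1) (fun t => g i t * wfun t))]
  exact Finset.prod_congr rfl fun i _ =>
    MeasureTheory.integral_indicator measurableSet_Ioo

instance cheb3_finite : IsFiniteMeasure chebMeasure3 := by
  constructor
  unfold chebMeasure3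
  rw [cheb_density_eq, withDensity_apply _ MeasurableSet.univ, Measure.restrict_univ]
  have hint : IntegrableOn (fun x : Fin 3 → ℝ => ∏ i, wfun (x i))
      (Set.univ.pi fun _ : Fin 3 => Set.Ioo (-1 : ℝ) 1) := by
    rw [← MeasureTheory.integrable_indicator_iff
      (MeasurableSet.univ_pi fun _ => measurableSet_Ioo)]
    have : Set.indicator (Set.univ.pi fun _ : Fin 3 => Set.Ioo (-1 : ℝ) 1)
        (fun y : Fin 3 → ℝ => ∏ i, wfun (y i))
        = fun x => ∏ i, Set.indicator (Set.Ioo (-1:ℝ) 1) wfun (x i) := by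
      funext x
      have := prodIndicator3 (fun _ _ => 1) x
      simpa using this
    rw [this]
    exact MeasureTheory.Integrable.fintype_prod (𝕜 := ℝ)
      (f := fun _ => Set.indicator (Set.Ioo (-1:ℝ) 1) wfun)
      (fun i => (integrable_indicator_iff measurableSet_Ioo).mpr wfun_integrableOn)
  calc ∫⁻ x in (Set.univ.pi fun _ : Fin 3 => Set.Ioo (-1 : ℝ) 1),
        ((Real.toNNReal (∏ i, wfun (x i)) : ℝ≥0) : ℝ≥0∞) ∂volume
      = ∫⁻ x in (Set.univ.pi fun _ : Fin 3 => Set.Ioo (-1 : ℝ) 1),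
          ENNReal.ofReal (∏ i, wfun (x i)) ∂volume := rfl
    _ = ENNReal.ofReal (∫ x in (Set.univ.pi fun _ : Fin 3 => Set.Ioo (-1 : ℝ) 1),
          (∏ i, wfun (x i)) ∂volume) := by
        rw [MeasureTheory.ofReal_integral_eq_lintegral_ofReal hint]
        exact Filter.Eventually.of_forall fun x => Finset.prod_nonneg fun i _ => wfun_nonneg _
    _ < ⊤ := ENNReal.ofReal_lt_top

end Fubini

section Span

lemma cospow (k : ℕ) : (fun θ => Real.cos θ ^ k) ∈
    Submodule.span ℝ (Set.range fun j : Fin (k+1) => fun θ : ℝ => Real.cos (((j : ℕ) : ℝ) * θ)) := by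
  induction k with
  | zero =>
    refine Submodule.subset_span ⟨0, ?_⟩
    funext θ; simp
  | succ k ih =>
    set M : (ℝ → ℝ) →ₗ[ℝ] (ℝ → ℝ) :=
      { toFun := fun f θ => Real.cos θ * f θ
        map_add' := by intro f g; funext θ; simp; ring
        map_smul' := by intro c f; funext θ; simp; ring } with hMdef
    have heq : (fun θ => Real.cos θ ^ (k+1)) = M (fun θ => Real.cos θ ^ k) := by
      funext θ; show Real.cos θ ^ (k+1) = Real.cos θ * Real.cos θ ^ k; ring
    rw [heq]
    refine SetLike.le_def.mp ?_ (Submodule.mem_map_of_mem ih)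
    rw [Submodule.map_span, Submodule.span_le]
    rintro f ⟨f', ⟨j, rfl⟩, rfl⟩
    by_cases hj : (j : ℕ) = 0
    · have : M (fun θ : ℝ => Real.cos (((j : ℕ) : ℝ) * θ))
          = fun θ : ℝ => Real.cos ((((1 : Fin (k+2)) : ℕ) : ℝ) * θ) := by
        funext θ
        show Real.cos θ * Real.cos (((j : ℕ) : ℝ) * θ) = _
        have h1 : ((1 : Fin (k+2)) : ℕ) = 1 := Fin.val_one _
        rw [hj, h1]; push_cast; simp
      rw [this]
      exact Submodule.subset_span ⟨1, rfl⟩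
    · have hj1 : 1 ≤ (j : ℕ) := Nat.one_le_iff_ne_zero.mpr hj
      have hlt1 : (j : ℕ) + 1 < k + 2 := by omega
      have hlt2 : (j : ℕ) - 1 < k + 2 := by omega
      have : M (fun θ : ℝ => Real.cos (((j : ℕ) : ℝ) * θ))
          = (1/2 : ℝ) • (fun θ : ℝ => Real.cos ((((j : ℕ) + 1 : ℕ) : ℝ) * θ))
            + (1/2 : ℝ) • (fun θ : ℝ => Real.cos ((((j : ℕ) - 1 : ℕ) : ℝ) * θ)) := by
        funext θ
        show Real.cos θ * Real.cos (((j : ℕ) : ℝ) * θ)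
          = (1/2 : ℝ) * Real.cos ((((j : ℕ) + 1 : ℕ) : ℝ) * θ)
            + (1/2 : ℝ) * Real.cos ((((j : ℕ) - 1 : ℕ) : ℝ) * θ)
        have key := Real.two_mul_cos_mul_cos (((j : ℕ) : ℝ) * θ) θ
        have c1 : (((j : ℕ) + 1 : ℕ) : ℝ) * θ = ((j : ℕ) : ℝ) * θ + θ := by push_cast; ring
        have c2 : (((j : ℕ) - 1 : ℕ) : ℝ) * θ = ((j : ℕ) : ℝ) * θ - θ := by
          rw [Nat.cast_sub hj1]; push_cast; ring
        rw [c1, c2]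
        linarith
      rw [this]
      refine Submodule.add_mem _ ?_ ?_
      · exact Submodule.smul_mem _ _ (Submodule.subset_span ⟨⟨(j : ℕ) + 1, hlt1⟩, rfl⟩)
      · exact Submodule.smul_mem _ _ (Submodule.subset_span ⟨⟨(j : ℕ) - 1, hlt2⟩, rfl⟩)

/-- On `[-1,1]`, `t^k` is a linear combination of `That j t`, `j ≤ k`. -/
lemma uni (k : ℕ) : ∃ c : ℕ → ℝ, ∀ t ∈ Set.Icc (-1:ℝ) 1,
    t ^ k = ∑ j ∈ Finset.range (k+1), c j * That j t := by
  obtain ⟨c, hc⟩ := (Submodule.mem_span_range_iff_exists_fun ℝ).mp (cospow k)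
  refine ⟨fun j => if hj : j < k + 1 then
      (if j = 0 then c ⟨j, hj⟩ else c ⟨j, hj⟩ / Real.sqrt 2) else 0, fun t ht => ?_⟩
  have hev := congrFun hc (Real.arccos t)
  simp only [Finset.sum_apply, Pi.smul_apply, smul_eq_mul] at hev
  rw [Real.cos_arccos ht.1 ht.2] at hev
  rw [Finset.sum_range fun j => _]
  rw [← hev]
  refine Finset.sum_congr rfl fun j _ => ?_
  have hj : (j : ℕ) < k + 1 := j.isLt
  by_cases h0 : (j : ℕ) = 0
  · simp only [dif_pos hj, if_pos h0, That, h0, Fin.eta]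
    norm_num
    exact congrArg c (Fin.ext h0)
  · simp only [dif_pos hj, That, if_neg h0, Fin.eta]
    have hs : Real.sqrt 2 ≠ 0 := by positivity
    field_simp

lemma expand (n : ℕ) (f : MvPolynomial (Fin 3) ℝ) (hf : f.totalDegree ≤ n) :
    ∃ c : (Fin 3 → ℕ) → ℝ, ∀ x ∈ cube3,
      MvPolynomial.eval x f = ∑ β ∈ idx3 n, c β * pCheb β x := by
  set v : {β // β ∈ idx3 n} → (↥cube3 → ℝ) := fun β x => pCheb β.1 x.1 with hv
  have hspan : (fun x : ↥cube3 => MvPolynomial.eval x.1 f)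
      ∈ Submodule.span ℝ (Set.range v) := by
    have hrep : (fun x : ↥cube3 => MvPolynomial.eval x.1 f)
        = ∑ d ∈ f.support, MvPolynomial.coeff d f •
            (fun x : ↥cube3 => ∏ i, (x.1 i) ^ d i) := by
      funext x
      rw [MvPolynomial.eval_eq']
      simp [Finset.sum_apply]
    rw [hrep]
    refine Submodule.sum_mem _ fun d hd => Submodule.smul_mem _ _ ?_
    have hdeg : ∑ i, d i ≤ n := by
      have h1 := MvPolynomial.le_totalDegree hd
      have h2 : (d.sum fun _ e => e) = ∑ i, d i := by
        rw [Finsupp.sum_fintype]; intro i; rfl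
      omega
    choose cs hcs using fun i => uni (d i)
    have hidx : ∀ γ ∈ Fintype.piFinset (fun i => Finset.range (d i + 1)), γ ∈ idx3 n := by
      intro γ hγ
      rw [Fintype.mem_piFinset] at hγ
      have hγd : ∀ i, γ i ≤ d i := fun i => by
        have := hγ i; rw [Finset.mem_range] at this; omega
      have hsum : ∑ s, γ s ≤ n :=
        le_trans (Finset.sum_le_sum fun i _ => hγd i) hdeg
      rw [idx3, Finset.mem_filter]
      refine ⟨Fintype.mem_piFinset.mpr fun i => Finset.mem_range.mpr ?_, hsum⟩
      have : γ i ≤ ∑ s, γ s := Finset.single_le_sum (fun s _ => Nat.zero_le _) (Finset.mem_univ i)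
      omega
    have hfun : (fun x : ↥cube3 => ∏ i, (x.1 i) ^ d i)
        = ∑ γ ∈ Fintype.piFinset (fun i => Finset.range (d i + 1)),
            (∏ i, cs i (γ i)) • (fun x : ↥cube3 => pCheb γ x.1) := by
      funext x
      have hx : ∀ i, (x.1 i) ^ d i = ∑ j ∈ Finset.range (d i + 1), cs i j * That j (x.1 i) :=
        fun i => hcs i (x.1 i) (x.2 i (Set.mem_univ i))
      rw [Finset.prod_congr rfl (fun i _ => hx i), Finset.prod_univ_sum]
      rw [Finset.sum_apply]
      refine Finset.sum_congr rfl fun γ hγ => ?_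
      rw [Pi.smul_apply, smul_eq_mul, Finset.prod_mul_distrib]
      rfl
    rw [hfun]
    refine Submodule.sum_mem _ fun γ hγ => Submodule.smul_mem _ _ ?_
    exact Submodule.subset_span ⟨⟨γ, hidx γ hγ⟩, rfl⟩
  obtain ⟨c0, hc0⟩ := (Submodule.mem_span_range_iff_exists_fun ℝ).mp hspan
  refine ⟨fun β => if hβ : β ∈ idx3 n then c0 ⟨β, hβ⟩ else 0, fun x hx => ?_⟩
  have := congrFun hc0 ⟨x, hx⟩
  simp only [Finset.sum_apply, Pi.smul_apply, smul_eq_mul] at this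
  rw [← this, ← Finset.sum_coe_sort (idx3 n)
    (fun β => (if hβ : β ∈ idx3 n then c0 ⟨β, hβ⟩ else 0) * pCheb β x)]
  refine Finset.sum_congr rfl fun i _ => ?_
  rw [dif_pos i.2]

end Span

section ChebPoly

open Polynomial

lemma T_natDeg (k : ℕ) : (Polynomial.Chebyshev.T ℝ (k : ℤ)).natDegree ≤ k := by
  induction k using Nat.twoStepInduction with
  | zero => simp [Polynomial.Chebyshev.T_zero]
  | one => simpa [Polynomial.Chebyshev.T_one] using Polynomial.natDegree_X_le
  | more n ih1 ih2 =>
    have : ((n + 2 : ℕ) : ℤ) = (n : ℤ) + 2 := by push_cast; ring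
    rw [this, Polynomial.Chebyshev.T_add_two]
    refine le_trans (Polynomial.natDegree_sub_le _ _) ?_
    rw [max_le_iff]
    constructor
    · refine le_trans (Polynomial.natDegree_mul_le) ?_
      have h1 : (2 * Polynomial.X : ℝ[X]).natDegree ≤ 1 :=
        le_trans (Polynomial.natDegree_mul_le) (by simpa using Polynomial.natDegree_X_le)
      have h2 : (Polynomial.Chebyshev.T ℝ ((n : ℤ) + 1)).natDegree ≤ n + 1 := by
        have : ((n + 1 : ℕ) : ℤ) = (n : ℤ) + 1 := by push_cast; ring
        rw [← this]; exact ih2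
      omega
    · omega

lemma T_eval_icc (k : ℕ) (t : ℝ) (ht : t ∈ Set.Icc (-1:ℝ) 1) :
    (Polynomial.Chebyshev.T ℝ (k : ℤ)).eval t = Real.cos ((k : ℝ) * Real.arccos t) := by
  conv_lhs => rw [← Real.cos_arccos ht.1 ht.2]
  rw [Polynomial.Chebyshev.T_real_cos]
  norm_num

noncomputable def TpolyHat (k : ℕ) : ℝ[X] :=
  if k = 0 then 1 else (Real.sqrt 2) • Polynomial.Chebyshev.T ℝ (k : ℤ)

lemma TpolyHat_natDeg (k : ℕ) : (TpolyHat k).natDegree ≤ k := by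
  unfold TpolyHat
  split
  · simp
  · exact le_trans (Polynomial.natDegree_smul_le _ _) (T_natDeg k)

lemma TpolyHat_eval (k : ℕ) (t : ℝ) (ht : t ∈ Set.Icc (-1:ℝ) 1) :
    (TpolyHat k).eval t = That k t := by
  unfold TpolyHat That
  split
  · simp
  · rw [Polynomial.eval_smul, smul_eq_mul, T_eval_icc k t ht]

/-- multivariate version of `TpolyHat (α s)` in variable `s`. -/
noncomputable def PC (α : Fin 3 → ℕ) : MvPolynomial (Fin 3) ℝ :=
  ∏ s, Polynomial.aeval (MvPolynomial.X s) (TpolyHat (α s))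

lemma aeval_X_eval (x : Fin 3 → ℝ) (s : Fin 3) (p : ℝ[X]) :
    MvPolynomial.eval x (Polynomial.aeval (MvPolynomial.X s) p) = p.eval (x s) := by
  rw [Polynomial.aeval_def, Polynomial.eval₂_eq_sum_range]
  simp [Polynomial.eval_eq_sum_range]

lemma PC_eval (α : Fin 3 → ℕ) (x : Fin 3 → ℝ) (hx : x ∈ cube3) :
    MvPolynomial.eval x (PC α) = pCheb α x := by
  unfold PC pCheb
  rw [map_prod]
  exact Finset.prod_congr rfl fun s _ => by
    rw [aeval_X_eval, TpolyHat_eval _ _ (hx s (Set.mem_univ s))]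

lemma aeval_X_totalDegree (s : Fin 3) (p : ℝ[X]) :
    (Polynomial.aeval (MvPolynomial.X s) p : MvPolynomial (Fin 3) ℝ).totalDegree ≤ p.natDegree := by
  rw [Polynomial.aeval_eq_sum_range]
  refine le_trans (MvPolynomial.totalDegree_finset_sum _ _) ?_
  refine Finset.sup_le fun i hi => ?_
  refine le_trans (MvPolynomial.totalDegree_smul_le _ _) ?_
  refine le_trans (MvPolynomial.totalDegree_pow _ _) ?_
  rw [MvPolynomial.totalDegree_X]
  simp only [Finset.mem_range] at hi
  omega

lemma PC_totalDegree (α : Fin 3 → ℕ) : (PC α).totalDegree ≤ ∑ s, α s := by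
  unfold PC
  refine le_trans (MvPolynomial.totalDegree_finset_prod _ _) ?_
  exact Finset.sum_le_sum fun s _ => le_trans (aeval_X_totalDegree s _) (TpolyHat_natDeg _)

end ChebPoly

section MainAux

lemma That_continuous (k : ℕ) : Continuous (That k) := by
  unfold That
  split
  · exact continuous_const
  · exact continuous_const.mul (Real.continuous_cos.comp
      (continuous_const.mul Real.continuous_arccos))

lemma That_measurable (k : ℕ) : Measurable (That k) := (That_continuous k).measurable

lemma pCheb_continuous (α : Fin 3 → ℕ) : Continuous (pCheb α) := by
  unfold pCheb
  exact continuous_finset_prod _ fun s _ => (That_continuous (α s)).comp (continuous_apply s)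

lemma That_bound (k : ℕ) (x : ℝ) : |That k x| ≤ Real.sqrt 2 := by
  unfold That
  split
  · rw [abs_one]
    rw [show (2:ℝ) = (1:ℝ)^2 + 1 by norm_num]
    exact Real.one_le_sqrt.mpr (by norm_num)
  · rw [abs_mul, abs_of_nonneg (Real.sqrt_nonneg 2)]
    calc Real.sqrt 2 * |Real.cos _| ≤ Real.sqrt 2 * 1 :=
          mul_le_mul_of_nonneg_left (Real.abs_cos_le_one _) (Real.sqrt_nonneg 2)
      _ = Real.sqrt 2 := mul_one _

lemma pCheb_bound (α : Fin 3 → ℕ) (x : Fin 3 → ℝ) : |pCheb α x| ≤ Real.sqrt 2 ^ 3 := by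
  unfold pCheb
  rw [Finset.abs_prod]
  calc ∏ s, |That (α s) (x s)| ≤ ∏ _s : Fin 3, Real.sqrt 2 :=
        Finset.prod_le_prod (fun s _ => abs_nonneg _) (fun s _ => That_bound _ _)
    _ = Real.sqrt 2 ^ 3 := by simp [Finset.prod_const]

lemma pCheb_integrable (α : Fin 3 → ℕ) : Integrable (pCheb α) chebMeasure3 := by
  have := (integrable_const (1:ℝ) (μ := chebMeasure3)).bdd_mul
    ((pCheb_continuous α).aestronglyMeasurable)
    (c := Real.sqrt 2 ^ 3) (Filter.Eventually.of_forall fun x => by simpa using pCheb_bound α x)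
  simpa using this

lemma cheb3_ae_cube : ∀ᵐ x ∂chebMeasure3, x ∈ cube3 := by
  have hmc : MeasurableSet cube3 := MeasurableSet.univ_pi fun _ => measurableSet_Icc
  have hsub : (Set.univ.pi fun _ : Fin 3 => Set.Ioo (-1 : ℝ) 1) ⊆ cube3 :=
    Set.pi_mono fun i _ => Set.Ioo_subset_Icc_self
  have h0 : (volume.restrict (Set.univ.pi fun _ : Fin 3 => Set.Ioo (-1 : ℝ) 1))
      cube3ᶜ = 0 := by
    rw [Measure.restrict_apply hmc.compl]
    have he : cube3ᶜ ∩ (Set.univ.pi fun _ : Fin 3 => Set.Ioo (-1 : ℝ) 1) = ∅ := by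
      rw [Set.eq_empty_iff_forall_notMem]
      intro x hx
      exact hx.1 (hsub hx.2)
    rw [he, measure_empty]
  exact (MeasureTheory.ae_iff).mpr
    (MeasureTheory.withDensity_absolutelyContinuous _ _ h0)

lemma pCheb_orth (α β : Fin 3 → ℕ) :
    ∫ x, pCheb α x * pCheb β x ∂chebMeasure3 = if α = β then 1 else 0 := by
  have hprod : (fun x : Fin 3 → ℝ => pCheb α x * pCheb β x)
      = fun x => ∏ i, (That (α i) (x i) * That (β i) (x i)) := by
    funext x
    unfold pCheb
    rw [Finset.prod_mul_distrib]
  rw [hprod, cheb3_prod (fun i t => That (α i) t * That (β i) t) (fun i => (That_measurable (α i)).mul (That_measurable (β i)))]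
  have := fun i => that_orth (α i) (β i)
  simp only [this]
  by_cases h : α = β
  · subst h; simp
  · rw [if_neg h]
    obtain ⟨i, hi⟩ := Function.ne_iff.mp h
    exact Finset.prod_eq_zero (Finset.mem_univ i) (if_neg hi)

end MainAux

/-- Exactness of the product cubature obtained by integrating the hyperinterpolant
against `h ∈ L²(dμ)`: with orthogonal moments `m_α = ∫ h p_α dμ` and weights
`λ_ξ = w_ξ ∑_{|α|≤n} p_α(ξ) m_α`, the formula `∑_{ξ∈X} λ_ξ f(ξ) = ∫ h f dμ`
holds for every polynomial `f` of total degree `≤ n`. -/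
theorem product_cubature_exact (n : ℕ)
    (X : Finset (Fin 3 → ℝ)) (hX : ∀ ξ ∈ X, ξ ∈ cube3)
    (w : (Fin 3 → ℝ) → ℝ)
    (hexact : ∀ q : MvPolynomial (Fin 3) ℝ, q.totalDegree ≤ 2 * n →
      ∑ ξ ∈ X, w ξ * MvPolynomial.eval ξ q = ∫ x, MvPolynomial.eval x q ∂chebMeasure3)
    (h : (Fin 3 → ℝ) → ℝ) (hh : MemLp h 2 chebMeasure3)
    (f : MvPolynomial (Fin 3) ℝ) (hf : f.totalDegree ≤ n) :
    ∑ ξ ∈ X,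
        (w ξ * ∑ α ∈ idx3 n, pCheb α ξ * ∫ x, h x * pCheb α x ∂chebMeasure3) *
          MvPolynomial.eval ξ f =
      ∫ x, h x * MvPolynomial.eval x f ∂chebMeasure3 := by
  set μ := chebMeasure3
  set m : (Fin 3 → ℕ) → ℝ := fun α => ∫ x, h x * pCheb α x ∂μ with hm
  obtain ⟨c, hc⟩ := expand n f hf
  have hhint : Integrable h μ := hh.integrable one_le_two
  have hint_hp : ∀ β, Integrable (fun x => h x * pCheb β x) μ := by
    intro β
    have := hhint.bdd_mul ((pCheb_continuous β).aestronglyMeasurable)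
      (c := Real.sqrt 2 ^ 3) (Filter.Eventually.of_forall fun x => by simpa using pCheb_bound β x)
    exact this.congr (Filter.Eventually.of_forall fun x => by ring)
  have hint_pp : ∀ α β, Integrable (fun x => pCheb α x * pCheb β x) μ := by
    intro α β
    exact (pCheb_integrable β).bdd_mul ((pCheb_continuous α).aestronglyMeasurable)
      (c := Real.sqrt 2 ^ 3) (Filter.Eventually.of_forall fun x => by simpa using pCheb_bound α x)
  -- step 1: ∫ pCheb α · f dμ = c α for α in the index set
  have key1 : ∀ α ∈ idx3 n, ∫ x, pCheb α x * MvPolynomial.eval x f ∂μ = c α := by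
    intro α hα
    have hae : (fun x => pCheb α x * MvPolynomial.eval x f)
        =ᵐ[μ] fun x => ∑ β ∈ idx3 n, c β * (pCheb α x * pCheb β x) := by
      filter_upwards [cheb3_ae_cube] with x hx
      rw [hc x hx, Finset.mul_sum]
      exact Finset.sum_congr rfl fun β _ => by ring
    rw [MeasureTheory.integral_congr_ae hae,
      MeasureTheory.integral_finset_sum _ (fun β _ => (hint_pp α β).const_mul (c β))]
    have : ∀ β ∈ idx3 n, ∫ x, c β * (pCheb α x * pCheb β x) ∂μ
        = c β * (if α = β then 1 else 0) := by
      intro β _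
      rw [MeasureTheory.integral_const_mul, pCheb_orth α β]
    rw [Finset.sum_congr rfl this]
    simp only [mul_ite, mul_one, mul_zero]
    rw [Finset.sum_ite_eq (idx3 n) α c, if_pos hα]
  -- step 2: ∫ h f dμ = ∑ c β * m β
  have key3 : ∫ x, h x * MvPolynomial.eval x f ∂μ = ∑ β ∈ idx3 n, c β * m β := by
    have hae : (fun x => h x * MvPolynomial.eval x f)
        =ᵐ[μ] fun x => ∑ β ∈ idx3 n, c β * (h x * pCheb β x) := by
      filter_upwards [cheb3_ae_cube] with x hx
      rw [hc x hx, Finset.mul_sum]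
      exact Finset.sum_congr rfl fun β _ => by ring
    rw [MeasureTheory.integral_congr_ae hae,
      MeasureTheory.integral_finset_sum _ (fun β _ => (hint_hp β).const_mul (c β))]
    exact Finset.sum_congr rfl fun β _ => by rw [MeasureTheory.integral_const_mul]
  -- step 3: cubature exactness for pCheb α * f
  have cub : ∀ α ∈ idx3 n,
      ∑ ξ ∈ X, w ξ * (pCheb α ξ * MvPolynomial.eval ξ f)
        = ∫ x, pCheb α x * MvPolynomial.eval x f ∂μ := by
    intro α hα
    have hαn : ∑ s, α s ≤ n := (Finset.mem_filter.mp hα).2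
    have hdeg : (PC α * f).totalDegree ≤ 2 * n := by
      refine le_trans (MvPolynomial.totalDegree_mul _ _) ?_
      have := le_trans (PC_totalDegree α) hαn
      omega
    have hx := hexact (PC α * f) hdeg
    have hL : ∑ ξ ∈ X, w ξ * MvPolynomial.eval ξ (PC α * f)
        = ∑ ξ ∈ X, w ξ * (pCheb α ξ * MvPolynomial.eval ξ f) := by
      refine Finset.sum_congr rfl fun ξ hξ => ?_
      rw [MvPolynomial.eval_mul, PC_eval α ξ (hX ξ hξ)]
    have hR : ∫ x, MvPolynomial.eval x (PC α * f) ∂μ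
        = ∫ x, pCheb α x * MvPolynomial.eval x f ∂μ := by
      refine MeasureTheory.integral_congr_ae ?_
      filter_upwards [cheb3_ae_cube] with x hxc
      rw [MvPolynomial.eval_mul, PC_eval α x hxc]
    rw [← hL, hx, hR]
  -- final assembly
  calc ∑ ξ ∈ X, (w ξ * ∑ α ∈ idx3 n, pCheb α ξ * m α) * MvPolynomial.eval ξ f
      = ∑ α ∈ idx3 n, m α * ∑ ξ ∈ X, w ξ * (pCheb α ξ * MvPolynomial.eval ξ f) := by
        simp_rw [Finset.mul_sum, Finset.sum_mul]
        rw [Finset.sum_comm]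
        exact Finset.sum_congr rfl fun α _ => Finset.sum_congr rfl fun ξ _ => by ring
    _ = ∑ α ∈ idx3 n, m α * c α := by
        refine Finset.sum_congr rfl fun α hα => ?_
        rw [cub α hα, key1 α hα]
    _ = ∑ β ∈ idx3 n, c β * m β := Finset.sum_congr rfl fun β _ => by ring
    _ = ∫ x, h x * MvPolynomial.eval x f ∂μ := key3.symm
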